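/- Let N ⊆ ℝⁿ × ℝᵐ be open and let f = (f_a, f_b) : N → ℝ^{n−m̃} × ℝ^{m̃} be smooth with rank ∂_u f(x,u) = rank ∂_u f_b(x,u) = m̃ for all (x,u) ∈ N. Then around every point of N there exists a smooth map f̃_a = f̃_a(x, w), w ∈ ℝ^{m̃}, such that f_a(x,u) = f̃_a(x, f_b(x,u)) holds locally; consequently, with the new input ũ := f_b(x,u) the sampled-data system x_{a,1} = f_a(x,u), x_{b,1} = f_b(x,u) takes the form x_{a,1} = f̃_a(x, ũ), x_{b,1} = ũ. -/

import Mathlib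

/-- The rank of the partial derivative with respect to the input `u` of a map
`g` defined on state-input pairs, at the point `p`. -/
noncomputable def uRank {n m : ℕ} {F : Type*} [NormedAddCommGroup F] [NormedSpace ℝ F]
    (g : (Fin n → ℝ) × (Fin m → ℝ) → F) (p : (Fin n → ℝ) × (Fin m → ℝ)) : ℕ :=
  Module.finrank ℝ (LinearMap.range ((fderiv ℝ (fun u => g (p.1, u)) p.2 : (Fin m → ℝ) →ₗ[ℝ] F)))

open Metric Module Set ContinuousLinearMap

/-- Kernel comparison: if the rank of `L'.prod L` is at most the rank of `L`,
then the kernel of `L` is contained in the kernel of `L'`. -/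
lemma aux_ker_le {E F G : Type*} [NormedAddCommGroup E] [NormedSpace ℝ E]
    [NormedAddCommGroup F] [NormedSpace ℝ F] [NormedAddCommGroup G] [NormedSpace ℝ G]
    [FiniteDimensional ℝ E] (L' : E →L[ℝ] F) (L : E →L[ℝ] G)
    (h : Module.finrank ℝ (LinearMap.range ((L'.prod L : E →L[ℝ] F × G) : E →ₗ[ℝ] F × G)) ≤ Module.finrank ℝ (LinearMap.range (L : E →ₗ[ℝ] G)))
    {v : E} (hv : L v = 0) : L' v = 0 := by
  have hk : LinearMap.ker ((L'.prod L : E →L[ℝ] F × G) : E →ₗ[ℝ] F × G) ≤ LinearMap.ker (L : E →ₗ[ℝ] G) := by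
    intro w hw
    simp only [LinearMap.mem_ker] at hw ⊢
    have : (L'.prod L) w = 0 := hw
    have := congrArg Prod.snd this
    simpa using this
  have r1 := LinearMap.finrank_range_add_finrank_ker ((L'.prod L) : E →ₗ[ℝ] F × G)
  have r2 := LinearMap.finrank_range_add_finrank_ker (L : E →ₗ[ℝ] G)
  have e1 : LinearMap.range ((L'.prod L) : E →ₗ[ℝ] F × G) = LinearMap.range ((L'.prod L : E →L[ℝ] F × G) : E →ₗ[ℝ] F × G) := rfl
  have e2 : LinearMap.ker ((L'.prod L) : E →ₗ[ℝ] F × G) = LinearMap.ker ((L'.prod L : E →L[ℝ] F × G) : E →ₗ[ℝ] F × G) := rfl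
  have e3 : LinearMap.range (L : E →ₗ[ℝ] G) = LinearMap.range (L : E →ₗ[ℝ] G) := rfl
  have e4 : LinearMap.ker (L : E →ₗ[ℝ] G) = LinearMap.ker (L : E →ₗ[ℝ] G) := rfl
  rw [e1, e2] at r1
  rw [e3, e4] at r2
  have hfr : Module.finrank ℝ (LinearMap.ker (L : E →ₗ[ℝ] G)) ≤ Module.finrank ℝ (LinearMap.ker ((L'.prod L : E →L[ℝ] F × G) : E →ₗ[ℝ] F × G)) := by
    omega
  have hker : LinearMap.ker ((L'.prod L : E →L[ℝ] F × G) : E →ₗ[ℝ] F × G) = LinearMap.ker (L : E →ₗ[ℝ] G) :=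
    Submodule.eq_of_le_of_finrank_le hk hfr
  have hv' : v ∈ LinearMap.ker ((L'.prod L : E →L[ℝ] F × G) : E →ₗ[ℝ] F × G) := by rw [hker]; exact hv
  have hv'' : (L'.prod L) v = 0 := hv'
  have := congrArg Prod.fst hv''
  simpa using this

/-- A complement map for a surjective continuous linear map. -/
lemma aux_compl {U G R : Type*} [NormedAddCommGroup U] [NormedSpace ℝ U] [FiniteDimensional ℝ U]
    [NormedAddCommGroup G] [NormedSpace ℝ G] [FiniteDimensional ℝ G]
    [NormedAddCommGroup R] [NormedSpace ℝ R] [FiniteDimensional ℝ R]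
    (L : U →L[ℝ] G)
    (hR : finrank ℝ R + Module.finrank ℝ (LinearMap.range (L : U →ₗ[ℝ] G)) = finrank ℝ U) :
    ∃ E2 : U →L[ℝ] R, ∀ v, L v = 0 → E2 v = 0 → v = 0 := by
  set K : Submodule ℝ U := LinearMap.ker (L : U →ₗ[ℝ] G) with hK
  obtain ⟨C, hC⟩ := K.exists_isCompl
  have r2 := LinearMap.finrank_range_add_finrank_ker (L : U →ₗ[ℝ] G)
  have e3 : LinearMap.range (L : U →ₗ[ℝ] G) = LinearMap.range (L : U →ₗ[ℝ] G) := rfl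
  have e4 : LinearMap.ker (L : U →ₗ[ℝ] G) = K := rfl
  rw [e3, e4] at r2
  have hKR : finrank ℝ K = finrank ℝ R := by omega
  let e : K ≃ₗ[ℝ] R := LinearEquiv.ofFinrankEq _ _ hKR
  let π : U →ₗ[ℝ] K := K.linearProjOfIsCompl C hC
  refine ⟨LinearMap.toContinuousLinearMap (e.toLinearMap.comp π), ?_⟩
  intro v hv1 hv2
  have hvK : v ∈ K := hv1
  have : e (π v) = 0 := hv2
  have hπ : π v = 0 := by
    have := congrArg e.symm this
    simpa using this
  have : π v = ⟨v, hvK⟩ := Submodule.linearProjOfIsCompl_apply_left hC ⟨v, hvK⟩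
  rw [this] at hπ
  simpa using congrArg Subtype.val hπ

set_option maxHeartbeats 1000000 in
/-- Let `N ⊆ ℝⁿ × ℝᵐ` be open and let `f = (f_a, f_b) : N → ℝ^{n−m̃} × ℝ^{m̃}` be
smooth with `rank ∂_u f(x,u) = rank ∂_u f_b(x,u) = m̃` on `N`.  Then around
every point of `N` there is a smooth map `f̃_a = f̃_a(x,w)`, `w ∈ ℝ^{m̃}`, such
that `f_a(x,u) = f̃_a(x, f_b(x,u))` holds locally; consequently, with the new
input `ũ := f_b(x,u)` the sampled-data system `x_{a,1} = f_a(x,u)`,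
`x_{b,1} = f_b(x,u)` takes the form `x_{a,1} = f̃_a(x,ũ)`, `x_{b,1} = ũ`. -/
theorem stmt_0 (n m mt na : ℕ) (hna : n = na + mt) (hmt : mt ≤ m)
    (N : Set ((Fin n → ℝ) × (Fin m → ℝ))) (hN : IsOpen N)
    (fa : (Fin n → ℝ) × (Fin m → ℝ) → (Fin na → ℝ))
    (fb : (Fin n → ℝ) × (Fin m → ℝ) → (Fin mt → ℝ))
    (hfa : ContDiffOn ℝ (⊤ : ℕ∞) fa N) (hfb : ContDiffOn ℝ (⊤ : ℕ∞) fb N)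
    (hrank : ∀ p ∈ N, uRank (fun q => (fa q, fb q)) p = mt)
    (hrankb : ∀ p ∈ N, uRank fb p = mt) :
    ∀ p ∈ N, ∃ V : Set ((Fin n → ℝ) × (Fin m → ℝ)), IsOpen V ∧ p ∈ V ∧ V ⊆ N ∧
      ∃ W : Set ((Fin n → ℝ) × (Fin mt → ℝ)), IsOpen W ∧
        ∃ fta : (Fin n → ℝ) × (Fin mt → ℝ) → (Fin na → ℝ),
          ContDiffOn ℝ (⊤ : ℕ∞) fta W ∧
          ∀ q ∈ V, (q.1, fb q) ∈ W ∧ fa q = fta (q.1, fb q) := by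
  classical
  intro p hp
  have hone : (1 : WithTop ℕ∞) ≤ ((⊤ : ℕ∞) : WithTop ℕ∞) := by exact_mod_cast le_top
  have hne : ((⊤ : ℕ∞) : WithTop ℕ∞) ≠ 0 := by simp
  -- derivatives of `fa` and `fb` at points of `N`
  have hfbD : ∀ q ∈ N, HasFDerivAt fb (fderiv ℝ fb q) q := fun q hq =>
    ((hfb.contDiffAt (hN.mem_nhds hq)).differentiableAt hne).hasFDerivAt
  have hfaD : ∀ q ∈ N, HasFDerivAt fa (fderiv ℝ fa q) q := fun q hq =>
    ((hfa.contDiffAt (hN.mem_nhds hq)).differentiableAt hne).hasFDerivAt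
  -- partial derivatives in the `u` direction
  have hLq : ∀ q ∈ N, HasFDerivAt (fun u => fb (q.1, u))
      ((fderiv ℝ fb q).comp (inr ℝ (Fin n → ℝ) (Fin m → ℝ))) q.2 := by
    intro q hq
    have h1 : HasFDerivAt (fun u : (Fin m → ℝ) => ((q.1, u) : (Fin n → ℝ) × (Fin m → ℝ))) (inr ℝ (Fin n → ℝ) (Fin m → ℝ)) q.2 :=
      hasFDerivAt_prodMk_right q.1 q.2
    have := (hfbD q hq).comp q.2 (by simpa using h1)
    simpa using this
  have hLq' : ∀ q ∈ N, HasFDerivAt (fun u => fa (q.1, u))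
      ((fderiv ℝ fa q).comp (inr ℝ (Fin n → ℝ) (Fin m → ℝ))) q.2 := by
    intro q hq
    have h1 : HasFDerivAt (fun u : (Fin m → ℝ) => ((q.1, u) : (Fin n → ℝ) × (Fin m → ℝ))) (inr ℝ (Fin n → ℝ) (Fin m → ℝ)) q.2 :=
      hasFDerivAt_prodMk_right q.1 q.2
    have := (hfaD q hq).comp q.2 (by simpa using h1)
    simpa using this
  -- rank facts in convenient form
  have hrankbq : ∀ q ∈ N, Module.finrank ℝ
      (LinearMap.range (((fderiv ℝ fb q).comp (inr ℝ (Fin n → ℝ) (Fin m → ℝ)) : (Fin m → ℝ) →L[ℝ] (Fin mt → ℝ)) : (Fin m → ℝ) →ₗ[ℝ] (Fin mt → ℝ))) = mt := by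
    intro q hq
    have := hrankb q hq
    rw [uRank] at this
    rwa [(hLq q hq).fderiv] at this
  have hrankq : ∀ q ∈ N, Module.finrank ℝ
      (LinearMap.range ((((fderiv ℝ fa q).comp (inr ℝ (Fin n → ℝ) (Fin m → ℝ))).prod
        ((fderiv ℝ fb q).comp (inr ℝ (Fin n → ℝ) (Fin m → ℝ))) : (Fin m → ℝ) →L[ℝ] (Fin na → ℝ) × (Fin mt → ℝ)) : (Fin m → ℝ) →ₗ[ℝ] (Fin na → ℝ) × (Fin mt → ℝ))) = mt := by
    intro q hq
    have := hrank q hq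
    rw [uRank] at this
    have hpair : HasFDerivAt (fun u => ((fun q => (fa q, fb q)) (q.1, u)))
        (((fderiv ℝ fa q).comp (inr ℝ (Fin n → ℝ) (Fin m → ℝ))).prod ((fderiv ℝ fb q).comp (inr ℝ (Fin n → ℝ) (Fin m → ℝ)))) q.2 :=
      (hLq' q hq).prodMk (hLq q hq)
    rwa [hpair.fderiv] at this
  -- the key pointwise kernel fact
  have hkey : ∀ q ∈ N, ∀ v : (Fin m → ℝ), fderiv ℝ fb q (0, v) = 0 → fderiv ℝ fa q (0, v) = 0 := by
    intro q hq v hv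
    have := aux_ker_le ((fderiv ℝ fa q).comp (inr ℝ (Fin n → ℝ) (Fin m → ℝ))) ((fderiv ℝ fb q).comp (inr ℝ (Fin n → ℝ) (Fin m → ℝ)))
      (by rw [hrankq q hq, hrankbq q hq]) (v := v) (by simpa using hv)
    simpa using this
  -- the complement map `E2`
  obtain ⟨E2, hE2⟩ := aux_compl (R := (Fin (m - mt) → ℝ)) ((fderiv ℝ fb p).comp (inr ℝ (Fin n → ℝ) (Fin m → ℝ))) (by
    rw [hrankbq p hp]
    simp only [Module.finrank_fintype_fun_eq_card, Fintype.card_fin]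
    omega)
  -- the map `Φ` and its derivative
  set Φ : (Fin n → ℝ) × (Fin m → ℝ) → ((Fin n → ℝ) × (Fin mt → ℝ)) × (Fin (m - mt) → ℝ) := fun q => ((q.1, fb q), E2 q.2) with hΦdef
  set DPhi : (Fin n → ℝ) × (Fin m → ℝ) → ((Fin n → ℝ) × (Fin m → ℝ)) →L[ℝ] ((Fin n → ℝ) × (Fin mt → ℝ)) × (Fin (m - mt) → ℝ) := fun q =>
    ((fst ℝ (Fin n → ℝ) (Fin m → ℝ)).prod (fderiv ℝ fb q)).prod (E2.comp (snd ℝ (Fin n → ℝ) (Fin m → ℝ))) with hDPhidef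
  have hΦsm : ContDiffOn ℝ (⊤ : ℕ∞) Φ N := by
    apply ContDiffOn.prodMk
    · exact (contDiff_fst.contDiffOn).prodMk hfb
    · exact ((E2.contDiff.comp contDiff_snd)).contDiffOn
  have hΦat : ∀ q ∈ N, ContDiffAt ℝ (⊤ : ℕ∞) Φ q := fun q hq =>
    hΦsm.contDiffAt (hN.mem_nhds hq)
  have hΦD : ∀ q ∈ N, HasFDerivAt Φ (DPhi q) q := by
    intro q hq
    apply HasFDerivAt.prodMk
    · exact (hasFDerivAt_fst).prodMk (hfbD q hq)
    · exact (E2.comp (snd ℝ (Fin n → ℝ) (Fin m → ℝ))).hasFDerivAt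
  -- injectivity of `DPhi p`
  have hinj : Function.Injective (DPhi p) := by
    intro w w' hww'
    have h0 : DPhi p (w - w') = 0 := by rw [map_sub, hww', sub_self]
    suffices h : w - w' = 0 by exact sub_eq_zero.mp h
    set z := w - w' with hz
    have h1 : z.1 = 0 := congrArg (fun y => y.1.1) h0
    have h2 : fderiv ℝ fb p z = 0 := congrArg (fun y => y.1.2) h0
    have h3 : E2 z.2 = 0 := congrArg (fun y => y.2) h0
    have hz2 : z = (0, z.2) := by rw [← h1]
    have h2' : fderiv ℝ fb p (0, z.2) = 0 := by rw [← hz2]; exact h2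
    have := hE2 z.2 (by simpa using h2') h3
    rw [hz2, this]
    rfl
  -- `DPhi p` as a continuous linear equivalence
  have hdim : Module.finrank ℝ ((Fin n → ℝ) × (Fin m → ℝ)) = Module.finrank ℝ (((Fin n → ℝ) × (Fin mt → ℝ)) × (Fin (m - mt) → ℝ)) := by
    simp only [Module.finrank_prod, Module.finrank_fintype_fun_eq_card, Fintype.card_fin]
    omega
  set Peq : ((Fin n → ℝ) × (Fin m → ℝ)) ≃L[ℝ] ((Fin n → ℝ) × (Fin mt → ℝ)) × (Fin (m - mt) → ℝ) :=
    (((DPhi p : ((Fin n → ℝ) × (Fin m → ℝ)) →ₗ[ℝ] ((Fin n → ℝ) × (Fin mt → ℝ)) × (Fin (m - mt) → ℝ))).linearEquivOfInjective hinj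
      hdim).toContinuousLinearEquiv with hPeqdef
  have hPeq : (Peq : ((Fin n → ℝ) × (Fin m → ℝ)) →L[ℝ] ((Fin n → ℝ) × (Fin mt → ℝ)) × (Fin (m - mt) → ℝ)) = DPhi p := by
    apply ContinuousLinearMap.ext
    intro w
    rfl
  have hΦD' : HasFDerivAt Φ ((Peq : ((Fin n → ℝ) × (Fin m → ℝ)) →L[ℝ]
      ((Fin n → ℝ) × (Fin mt → ℝ)) × (Fin (m - mt) → ℝ))) p := by
    rw [hPeq]; exact hΦD p hp
  set PH : OpenPartialHomeomorph ((Fin n → ℝ) × (Fin m → ℝ))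
      (((Fin n → ℝ) × (Fin mt → ℝ)) × (Fin (m - mt) → ℝ)) :=
    (hΦat p hp).toOpenPartialHomeomorph Φ hΦD' hne with hPHdef
  have hPHcoe : (PH : (Fin n → ℝ) × (Fin m → ℝ) →
      ((Fin n → ℝ) × (Fin mt → ℝ)) × (Fin (m - mt) → ℝ)) = Φ := rfl
  have hpsource : p ∈ PH.source :=
    (hΦat p hp).mem_toOpenPartialHomeomorph_source hΦD' hne
  have hptarget : Φ p ∈ PH.target :=
    (hΦat p hp).image_mem_toOpenPartialHomeomorph_target hΦD' hne
  set Pc : (((Fin n → ℝ) × (Fin mt → ℝ)) × (Fin (m - mt) → ℝ)) →L[ℝ]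
      ((Fin n → ℝ) × (Fin m → ℝ)) :=
    (Peq.symm : (((Fin n → ℝ) × (Fin mt → ℝ)) × (Fin (m - mt) → ℝ)) →L[ℝ]
      ((Fin n → ℝ) × (Fin m → ℝ))) with hPcdef
  set detf : (Fin n → ℝ) × (Fin m → ℝ) → ℝ := fun q =>
    LinearMap.det (↑(Pc.comp (DPhi q)) :
      ((Fin n → ℝ) × (Fin m → ℝ)) →ₗ[ℝ] ((Fin n → ℝ) × (Fin m → ℝ))) with hdetfdef
  have hdetcont : ContinuousOn detf N := by
    have h1 : ContinuousOn (fun q => fderiv ℝ fb q) N :=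
      hfb.continuousOn_fderiv_of_isOpen hN (by exact_mod_cast le_top)
    have hc : Continuous (fun B : ((Fin n → ℝ) × (Fin m → ℝ)) →L[ℝ]
        (((Fin n → ℝ) × (Fin mt → ℝ)) × (Fin (m - mt) → ℝ)) => Pc.comp B) :=
      ((ContinuousLinearMap.compL ℝ ((Fin n → ℝ) × (Fin m → ℝ))
        (((Fin n → ℝ) × (Fin mt → ℝ)) × (Fin (m - mt) → ℝ))
        ((Fin n → ℝ) × (Fin m → ℝ))) Pc).continuous
    have c1 : Continuous (fun B : ((Fin n → ℝ) × (Fin m → ℝ)) →L[ℝ]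
        (((Fin n → ℝ) × (Fin mt → ℝ)) × (Fin (m - mt) → ℝ)) =>
        LinearMap.det (↑(Pc.comp B) :
          ((Fin n → ℝ) × (Fin m → ℝ)) →ₗ[ℝ] ((Fin n → ℝ) × (Fin m → ℝ)))) :=
      ContinuousLinearMap.continuous_det.comp hc
    have c2 : Continuous (fun A : ((Fin n → ℝ) × (Fin m → ℝ)) →L[ℝ] (Fin mt → ℝ) =>
        ((fst ℝ (Fin n → ℝ) (Fin m → ℝ)).prod A).prod
          (E2.comp (snd ℝ (Fin n → ℝ) (Fin m → ℝ)))) := by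
      set C0 : ((Fin n → ℝ) × (Fin m → ℝ)) →L[ℝ]
          (((Fin n → ℝ) × (Fin mt → ℝ)) × (Fin (m - mt) → ℝ)) :=
        (((fst ℝ (Fin n → ℝ) (Fin m → ℝ)).prod 0).prod
          (E2.comp (snd ℝ (Fin n → ℝ) (Fin m → ℝ)))) with hC0
      set C1 : (Fin mt → ℝ) →L[ℝ] (((Fin n → ℝ) × (Fin mt → ℝ)) × (Fin (m - mt) → ℝ)) :=
        (inl ℝ ((Fin n → ℝ) × (Fin mt → ℝ)) (Fin (m - mt) → ℝ)).comp
          (inr ℝ (Fin n → ℝ) (Fin mt → ℝ)) with hC1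
      have key : (fun A : ((Fin n → ℝ) × (Fin m → ℝ)) →L[ℝ] (Fin mt → ℝ) =>
          ((fst ℝ (Fin n → ℝ) (Fin m → ℝ)).prod A).prod
            (E2.comp (snd ℝ (Fin n → ℝ) (Fin m → ℝ))))
          = fun A => C0 + C1.comp A := by
        funext A
        apply ContinuousLinearMap.ext
        intro x
        simp [C0, C1, Prod.ext_iff]
      rw [key]
      have hc1 : Continuous (fun A : ((Fin n → ℝ) × (Fin m → ℝ)) →L[ℝ] (Fin mt → ℝ) =>
          C1.comp A) :=
        ((ContinuousLinearMap.compL ℝ ((Fin n → ℝ) × (Fin m → ℝ)) (Fin mt → ℝ)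
          (((Fin n → ℝ) × (Fin mt → ℝ)) × (Fin (m - mt) → ℝ))) C1).continuous
      exact continuous_const.add hc1
    exact (c1.comp c2).comp_continuousOn h1
  set S : Set ((Fin n → ℝ) × (Fin m → ℝ)) := N ∩ detf ⁻¹' ({0}ᶜ) with hSdef
  have hSopen : IsOpen S := hdetcont.isOpen_inter_preimage hN isOpen_compl_singleton
  have hSN : S ⊆ N := inter_subset_left
  have hpS : p ∈ S := by
    refine ⟨hp, ?_⟩
    have hid : (↑(Pc.comp (DPhi p)) :
        ((Fin n → ℝ) × (Fin m → ℝ)) →ₗ[ℝ] ((Fin n → ℝ) × (Fin m → ℝ))) = LinearMap.id := by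
      apply LinearMap.ext
      intro w
      rw [hPcdef, ← hPeq]
      simp
    simp only [hdetfdef, Set.mem_preimage, Set.mem_compl_iff, Set.mem_singleton_iff]
    rw [hid, LinearMap.det_id]
    exact one_ne_zero
  have hDeqEx : ∀ q, q ∈ S → ∃ eq : ((Fin n → ℝ) × (Fin m → ℝ)) ≃L[ℝ]
      ((Fin n → ℝ) × (Fin mt → ℝ)) × (Fin (m - mt) → ℝ),
      (eq : ((Fin n → ℝ) × (Fin m → ℝ)) →L[ℝ]
      ((Fin n → ℝ) × (Fin mt → ℝ)) × (Fin (m - mt) → ℝ)) = DPhi q := by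
    intro q hq
    have hdet : LinearMap.det (↑(Pc.comp (DPhi q)) :
        ((Fin n → ℝ) × (Fin m → ℝ)) →ₗ[ℝ] ((Fin n → ℝ) × (Fin m → ℝ))) ≠ 0 := hq.2
    refine ⟨((LinearMap.equivOfDetNeZero _ hdet).toContinuousLinearEquiv).trans Peq, ?_⟩
    apply ContinuousLinearMap.ext
    intro w
    show Peq ((LinearMap.equivOfDetNeZero _ hdet) w) = DPhi q w
    have h1 : (LinearMap.equivOfDetNeZero _ hdet) w = Peq.symm (DPhi q w) := rfl
    rw [h1]
    exact Peq.apply_symm_apply _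
  choose Deq hDeqCoe using hDeqEx
  set T : Set ((((Fin n → ℝ) × (Fin mt → ℝ)) × (Fin (m - mt) → ℝ))) :=
    PH.target ∩ PH.symm ⁻¹' S with hTdef
  have hTopen : IsOpen T :=
    PH.continuousOn_symm.isOpen_inter_preimage PH.open_target hSopen
  have hpT : Φ p ∈ T := by
    refine ⟨hptarget, ?_⟩
    have hlr : PH.symm (Φ p) = p := PH.left_inv hpsource
    simpa [hlr] using hpS
  obtain ⟨r, hr0, hrball⟩ := Metric.isOpen_iff.mp hTopen _ hpT
  have hsplit : ball (Φ p) r = ball (Φ p).1 r ×ˢ ball (Φ p).2 r :=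
    (ball_prod_same _ _ _).symm
  have hballmem : ∀ (z : (Fin n → ℝ) × (Fin mt → ℝ)) (c : Fin (m - mt) → ℝ),
      (z, c) ∈ ball (Φ p) r ↔ z ∈ ball (Φ p).1 r ∧ c ∈ ball (Φ p).2 r := by
    intro z c
    rw [hsplit]
    exact Set.mem_prod
  have hyN : ∀ y ∈ T, PH.symm y ∈ N := fun y hy => hSN hy.2
  have hyS : ∀ y ∈ T, PH.symm y ∈ S := fun y hy => hy.2
  have hψD : ∀ y, ∀ hy : y ∈ T, HasFDerivAt PH.symm
      (((Deq (PH.symm y) (hyS y hy)).symm :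
        (((Fin n → ℝ) × (Fin mt → ℝ)) × (Fin (m - mt) → ℝ)) →L[ℝ]
        ((Fin n → ℝ) × (Fin m → ℝ)))) y := by
    intro y hy
    apply OpenPartialHomeomorph.hasFDerivAt_symm PH hy.1
    rw [hDeqCoe (PH.symm y) (hyS y hy)]
    exact hΦD _ (hyN y hy)
  have hψCD : ∀ y ∈ T, ContDiffAt ℝ (⊤ : ℕ∞) PH.symm y := by
    intro y hy
    apply PH.contDiffAt_symm hy.1 (f₀' := Deq (PH.symm y) (hyS y hy))
    · rw [hDeqCoe (PH.symm y) (hyS y hy)]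
      exact hΦD _ (hyN y hy)
    · exact hΦat _ (hyN y hy)
  have hgzero : ∀ y, ∀ hy : y ∈ T, ∀ e : Fin (m - mt) → ℝ,
      fderiv ℝ fa (PH.symm y) ((Deq (PH.symm y) (hyS y hy)).symm
        (((0 : (Fin n → ℝ) × (Fin mt → ℝ)), e))) = 0 := by
    intro y hy e
    set q' := PH.symm y with hq'
    set w := (Deq q' (hyS y hy)).symm (((0 : (Fin n → ℝ) × (Fin mt → ℝ)), e)) with hw
    have happ : DPhi q' w = ((0 : (Fin n → ℝ) × (Fin mt → ℝ)), e) := by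
      rw [← hDeqCoe q' (hyS y hy)]
      exact (Deq q' (hyS y hy)).apply_symm_apply _
    have h1 : w.1 = 0 := congrArg (fun z => z.1.1) happ
    have h2 : fderiv ℝ fb q' w = 0 := congrArg (fun z => z.1.2) happ
    have hw2 : w = ((0 : Fin n → ℝ), w.2) := by rw [← h1]
    rw [hw2] at h2
    have hres := hkey q' (hyN y hy) w.2 h2
    rw [hw2]
    exact hres
  set c₀ : Fin (m - mt) → ℝ := (Φ p).2 with hc₀
  set fta : (Fin n → ℝ) × (Fin mt → ℝ) → (Fin na → ℝ) :=
    fun z => fa (PH.symm (z, c₀)) with hfta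
  set V : Set ((Fin n → ℝ) × (Fin m → ℝ)) :=
    (PH.source ∩ N) ∩ Φ ⁻¹' (ball (Φ p) r) with hV
  have hVopen : IsOpen V :=
    ContinuousOn.isOpen_inter_preimage
      (hΦsm.continuousOn.mono inter_subset_right) (PH.open_source.inter hN) isOpen_ball
  refine ⟨V, hVopen, ⟨⟨hpsource, hp⟩, mem_ball_self hr0⟩, fun q hq => hq.1.2,
    ball (Φ p).1 r, isOpen_ball, fta, ?_, ?_⟩
  · rw [(isOpen_ball).contDiffOn_iff]
    intro z hz
    have hzT : ((z, c₀)) ∈ T := hrball ((hballmem z c₀).mpr ⟨hz, mem_ball_self hr0⟩)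
    have h1 : ContDiffAt ℝ (⊤ : ℕ∞) (fun z : (Fin n → ℝ) × (Fin mt → ℝ) =>
        ((z, c₀) : ((Fin n → ℝ) × (Fin mt → ℝ)) × (Fin (m - mt) → ℝ))) z :=
      contDiffAt_id.prodMk contDiffAt_const
    have h2 := hψCD _ hzT
    have h3 : ContDiffAt ℝ (⊤ : ℕ∞) fa (PH.symm (z, c₀)) :=
      hfa.contDiffAt (hN.mem_nhds (hyN _ hzT))
    exact h3.comp z (h2.comp z h1)
  · intro q hq
    obtain ⟨⟨hqsrc, hqN⟩, hqball⟩ := hq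
    have hmem := (hballmem (q.1, fb q) (E2 q.2)).mp hqball
    refine ⟨hmem.1, ?_⟩
    set h : (Fin (m - mt) → ℝ) → (Fin na → ℝ) :=
      fun c => fa (PH.symm ((q.1, fb q), c)) with hh
    have hHD : ∀ c ∈ ball (Φ p).2 r, HasFDerivAt h (0 : (Fin (m - mt) → ℝ) →L[ℝ] (Fin na → ℝ)) c := by
      intro c hc
      have hyT : (((q.1, fb q), c)) ∈ T :=
        hrball ((hballmem (q.1, fb q) c).mpr ⟨hmem.1, hc⟩)
      have hg : HasFDerivAt (fun y => fa (PH.symm y))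
          ((fderiv ℝ fa (PH.symm ((q.1, fb q), c))).comp
            (((Deq (PH.symm ((q.1, fb q), c)) (hyS _ hyT)).symm
              : (((Fin n → ℝ) × (Fin mt → ℝ)) × (Fin (m - mt) → ℝ)) →L[ℝ]
                ((Fin n → ℝ) × (Fin m → ℝ))))) (((q.1, fb q), c)) :=
        (hfaD _ (hyN _ hyT)).comp _ (hψD _ hyT)
      have hmk : HasFDerivAt (fun c' : Fin (m - mt) → ℝ =>
          (((q.1, fb q), c') : ((Fin n → ℝ) × (Fin mt → ℝ)) × (Fin (m - mt) → ℝ)))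
          (inr ℝ ((Fin n → ℝ) × (Fin mt → ℝ)) (Fin (m - mt) → ℝ)) c :=
        hasFDerivAt_prodMk_right _ _
      have hcomp := hg.comp c hmk
      refine hcomp.congr_fderiv (Eq.symm ?_)
      apply ContinuousLinearMap.ext
      intro e
      symm
      simp only [ContinuousLinearMap.comp_apply, ContinuousLinearMap.inr_apply,
        ContinuousLinearMap.zero_apply]
      exact hgzero _ hyT e
    have hdiff : DifferentiableOn ℝ h (ball (Φ p).2 r) := fun c hc =>
      (hHD c hc).differentiableAt.differentiableWithinAt
    have hfz : ∀ c ∈ ball (Φ p).2 r, fderivWithin ℝ h (ball (Φ p).2 r) c = 0 := by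
      intro c hc
      rw [fderivWithin_of_isOpen isOpen_ball hc]
      exact (hHD c hc).fderiv
    have hconst := (convex_ball ((Φ p).2) r).is_const_of_fderivWithin_eq_zero hdiff hfz
      hmem.2 (mem_ball_self hr0)
    have hfaq : fa q = h (E2 q.2) := by
      have hlr : PH.symm (Φ q) = q := PH.left_inv hqsrc
      show fa q = fa (PH.symm ((q.1, fb q), E2 q.2))
      rw [show (((q.1, fb q), E2 q.2) : ((Fin n → ℝ) × (Fin mt → ℝ)) × (Fin (m - mt) → ℝ))
        = Φ q from rfl, hlr]
    rw [hfaq]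
    exact hconst
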